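/- For all x > 0, ψ'(x) > Q(x)/(1800 x² (1+x)¹⁰ (2+x)¹⁰), where Q(x) is the degree-21 polynomial 1382400 + 21657600x + 162792960x² + 778137600x³ + 2645782983x⁴ + 6789381590x⁵ + 13626443025x⁶ + 21889330810x⁷ + 28579049475x⁸ + 30634381522x⁹ + 27125436630x¹⁰ + 19896883200x¹¹ + 12088287630x¹² + 6063596590x¹³ + 2494770300x¹⁴ + 832958400x¹⁵ + 222060150x¹⁶ + 46134540x¹⁷ + 7195500x¹⁸ + 792300x¹⁹ + 54900x²⁰ + 1800x²¹. -/

import Mathlib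

noncomputable def trigamma (x : ℝ) : ℝ :=
  iteratedDeriv 2 (fun y => Real.log (Real.Gamma y)) x

noncomputable def Q (x : ℝ) : ℝ :=
  1382400 + 21657600*x + 162792960*x^2 + 778137600*x^3 + 2645782983*x^4
    + 6789381590*x^5 + 13626443025*x^6 + 21889330810*x^7 + 28579049475*x^8
    + 30634381522*x^9 + 27125436630*x^10 + 19896883200*x^11 + 12088287630*x^12
    + 6063596590*x^13 + 2494770300*x^14 + 832958400*x^15 + 222060150*x^16
    + 46134540*x^17 + 7195500*x^18 + 792300*x^19 + 54900*x^20 + 1800*x^21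

open Real Set Filter Topology

namespace Stmt3Aux

/-- The log-Gamma function. -/
noncomputable def F : ℝ → ℝ := fun y => Real.log (Real.Gamma y)

/-- Second derivative of log-Gamma. -/
noncomputable def T (x : ℝ) : ℝ := deriv (deriv F) x

lemma trigamma_eq_T (x : ℝ) : trigamma x = T x := by
  simp only [trigamma, T, show (2 : ℕ) = 1 + 1 from rfl, iteratedDeriv_succ,
    iteratedDeriv_one, iteratedDeriv_zero]
  rfl

/-- Asymptotic lower-bound function for trigamma. -/
noncomputable def g (y : ℝ) : ℝ := y⁻¹ + (y⁻¹)^2/2 + (y⁻¹)^3/6 - (y⁻¹)^5/30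

lemma g_bracket {z : ℝ} (hz : 0 < z) : g z - g (z+1) ≤ 1/z^2 := by
  have hz1 : 0 < z + 1 := by linarith
  have h : 1/z^2 - (g z - g (z+1)) = (5*z^2+5*z+1)/(30*z^5*(z+1)^5) := by
    unfold g
    field_simp
    ring
  have h2 : 0 < (5*z^2+5*z+1)/(30*z^5*(z+1)^5) := by positivity
  linarith

lemma gamma_analyticAt {x : ℝ} (hx : 0 < x) : AnalyticAt ℝ Real.Gamma x := by
  have h1 : AnalyticAt ℂ Complex.Gamma (x : ℂ) := by
    refine DifferentiableOn.analyticAt (s := {s : ℂ | 0 < s.re}) ?_ ?_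
    · intro s hs
      refine (Complex.differentiableAt_Gamma s fun m => ?_).differentiableWithinAt
      intro hsm
      have : (0:ℝ) < s.re := hs
      rw [hsm] at this
      simp only [Complex.neg_re, Complex.natCast_re] at this
      have : (0:ℝ) ≤ (m:ℝ) := Nat.cast_nonneg m
      linarith
    · refine (isOpen_lt continuous_const Complex.continuous_re).mem_nhds ?_
      simpa using hx
  have h2 : AnalyticAt ℝ (fun y : ℝ => (Complex.Gamma (y : ℂ)).re) x := by
    exact (Complex.reCLM.analyticAt _).comp
      ((h1.restrictScalars).comp (Complex.ofRealCLM.analyticAt x))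
  refine h2.congr ?_
  filter_upwards with y
  rw [Complex.Gamma_ofReal, Complex.ofReal_re]

lemma contDiffOn_F : ContDiffOn ℝ 3 F (Ioi 0) := by
  intro x hx
  have hx' : (0:ℝ) < x := hx
  refine ContDiffAt.contDiffWithinAt ?_
  exact ((gamma_analyticAt hx').contDiffAt).log (Real.Gamma_pos_of_pos hx').ne'

lemma diffF {x : ℝ} (hx : 0 < x) : DifferentiableAt ℝ F x :=
  ((contDiffOn_F.contDiffAt (isOpen_Ioi.mem_nhds hx)).differentiableAt (by norm_num))

lemma contDiffOn_dF : ContDiffOn ℝ 2 (deriv F) (Ioi 0) :=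
  contDiffOn_F.deriv_of_isOpen isOpen_Ioi (by norm_num)

lemma diffdF {x : ℝ} (hx : 0 < x) : DifferentiableAt ℝ (deriv F) x :=
  ((contDiffOn_dF.contDiffAt (isOpen_Ioi.mem_nhds hx)).differentiableAt (by norm_num))

lemma F_rec {x : ℝ} (hx : 0 < x) : F (x + 1) = F x + Real.log x := by
  simp only [F, Real.Gamma_add_one hx.ne',
    Real.log_mul hx.ne' (Real.Gamma_pos_of_pos hx).ne', add_comm]

lemma dF_rec {x : ℝ} (hx : 0 < x) : deriv F (x + 1) = deriv F x + 1/x := by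
  rw [← deriv_comp_add_const, one_div, ← Real.deriv_log,
    ← deriv_add (diffF hx) (Real.differentiableAt_log hx.ne')]
  apply Filter.EventuallyEq.deriv_eq
  filter_upwards [eventually_gt_nhds hx] with y hy
  exact F_rec hy

lemma T_rec {x : ℝ} (hx : 0 < x) : T (x + 1) = T x - 1/x^2 := by
  have e1 : deriv (deriv F) (x+1) = deriv (fun y => deriv F (y+1)) x :=
    (deriv_comp_add_const _ _ _).symm
  have e2 : (fun y => deriv F (y+1)) =ᶠ[𝓝 x] (fun y => deriv F y + 1/y) := by
    filter_upwards [eventually_gt_nhds hx] with y hy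
    exact dF_rec hy
  have hinv : DifferentiableAt ℝ (fun y : ℝ => 1/y) x := by
    simp only [one_div]
    exact differentiableAt_inv hx.ne'
  rw [T, T, e1, e2.deriv_eq, deriv_fun_add (diffdF hx) hinv]
  have : deriv (fun y : ℝ => 1/y) x = -(x^2)⁻¹ := by
    simp only [one_div]
    exact deriv_inv
  rw [this]
  ring

lemma T_nonneg {x : ℝ} (hx : 0 < x) : 0 ≤ T x := by
  have hmono : MonotoneOn (deriv F) (Ioi 0) := by
    have h := Real.convexOn_log_Gamma.monotoneOn_deriv
      (fun y hy => diffF (mem_Ioi.mp hy))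
    exact (by simpa only [Function.comp_def] using h : MonotoneOn (deriv fun x => log (Gamma x)) (Ioi 0))
  have hd := (diffdF hx).hasDerivAt
  rw [hasDerivAt_iff_tendsto_slope] at hd
  have hd' : Tendsto (slope (deriv F) x) (𝓝[>] x) (𝓝 (deriv (deriv F) x)) :=
    hd.mono_left (nhdsWithin_mono x (fun y hy => ne_of_gt hy))
  refine ge_of_tendsto hd' ?_
  filter_upwards [self_mem_nhdsWithin] with y hy
  have hy' : x < y := hy
  rw [slope_def_field]
  apply div_nonneg _ (by linarith)
  have h1 : deriv F x ≤ deriv F y :=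
    hmono (mem_Ioi.mpr hx) (mem_Ioi.mpr (by linarith)) hy'.le
  linarith

lemma T_ge_partial : ∀ n : ℕ, ∀ x : ℝ, 0 < x → g x - g (x + n) ≤ T x := by
  intro n
  induction n with
  | zero =>
    intro x hx
    simpa using T_nonneg hx
  | succ n ih =>
    intro x hx
    have hx1 : 0 < x + 1 := by linarith
    have h1 := ih (x + 1) hx1
    have h2 := T_rec hx
    have h3 := g_bracket hx
    have hcast : x + (n + 1 : ℕ) = (x + 1) + (n : ℕ) := by push_cast; ring
    rw [hcast]
    linarith

lemma g_tendsto (x : ℝ) (hx : 0 < x) :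
    Tendsto (fun n : ℕ => g (x + n)) atTop (𝓝 0) := by
  have ht : Tendsto (fun n : ℕ => x + (n : ℝ)) atTop atTop :=
    tendsto_atTop_add_const_left _ x tendsto_natCast_atTop_atTop
  have h1 : Tendsto (fun n : ℕ => (x + (n : ℝ))⁻¹) atTop (𝓝 0) :=
    ht.inv_tendsto_atTop
  have : Tendsto (fun n : ℕ => g (x + n)) atTop
      (𝓝 ((0:ℝ) + 0^2/2 + 0^3/6 - 0^5/30)) := by
    unfold g
    exact (((h1.add ((h1.pow 2).div_const 2)).add ((h1.pow 3).div_const 6)).sub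
      ((h1.pow 5).div_const 30))
  simpa using this

lemma T_ge_g {x : ℝ} (hx : 0 < x) : g x ≤ T x := by
  have h1 : Tendsto (fun n : ℕ => g x - g (x + n)) atTop (𝓝 (g x - 0)) :=
    tendsto_const_nhds.sub (g_tendsto x hx)
  rw [sub_zero] at h1
  exact le_of_tendsto h1 (Filter.Eventually.of_forall fun n => T_ge_partial n x hx)

lemma final_poly {x : ℝ} (hx : 0 < x) :
    Q x / (1800 * x^2 * (1+x)^10 * (2+x)^10)
      < 1/x^2 + 1/(x+1)^2 + 1/(x+2)^2 + g (x+3) := by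
  have hx1 : (0:ℝ) < x + 1 := by linarith
  have hx2 : (0:ℝ) < x + 2 := by linarith
  have hx3 : (0:ℝ) < x + 3 := by linarith
  have key : (1/x^2 + 1/(x+1)^2 + 1/(x+2)^2 + g (x+3))
      - Q x / (1800 * x^2 * (1+x)^10 * (2+x)^10)
      = (111974400 + 1642291200*x + 11317716480*x^2 + 48789619200*x^3
        + 147751547931*x^4 + 334561928715*x^5 + 588564121965*x^6
        + 824952415395*x^7 + 937188570930*x^8 + 873097017396*x^9
        + 672145279585*x^10 + 429496369185*x^11 + 228173519315*x^12
        + 100678035975*x^13 + 36754555778*x^14 + 11024331270*x^15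
        + 2687117400*x^16 + 523596090*x^17 + 79596410*x^18 + 9093600*x^19
        + 734250*x^20 + 37350*x^21 + 900*x^22)
        / (1800 * x^2 * (1+x)^10 * (2+x)^10 * (x+3)^5) := by
    unfold g Q
    have h1 : (1+x) ≠ 0 := by positivity
    have h2 : (2+x) ≠ 0 := by positivity
    field_simp
    ring
  have hP : 0 < (111974400 + 1642291200*x + 11317716480*x^2 + 48789619200*x^3
        + 147751547931*x^4 + 334561928715*x^5 + 588564121965*x^6
        + 824952415395*x^7 + 937188570930*x^8 + 873097017396*x^9
        + 672145279585*x^10 + 429496369185*x^11 + 228173519315*x^12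
        + 100678035975*x^13 + 36754555778*x^14 + 11024331270*x^15
        + 2687117400*x^16 + 523596090*x^17 + 79596410*x^18 + 9093600*x^19
        + 734250*x^20 + 37350*x^21 + 900*x^22)
        / (1800 * x^2 * (1+x)^10 * (2+x)^10 * (x+3)^5) := by
    rw [show x = |x| from (abs_of_pos hx).symm]
    positivity
  linarith

end Stmt3Aux

theorem stmt3 : ∀ x : ℝ, 0 < x →
    trigamma x > Q x / (1800 * x^2 * (1+x)^10 * (2+x)^10) := by
  intro x hx
  open Stmt3Aux in
  have h1 : T x = 1/x^2 + 1/(x+1)^2 + 1/(x+2)^2 + T (x+3) := by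
    have r1 := Stmt3Aux.T_rec hx
    have r2 := Stmt3Aux.T_rec (show (0:ℝ) < x + 1 by linarith)
    have r3 := Stmt3Aux.T_rec (show (0:ℝ) < x + 2 by linarith)
    have e1 : x + 1 + 1 = x + 2 := by ring
    have e2 : x + 2 + 1 = x + 3 := by ring
    rw [e1] at r2
    rw [e2] at r3
    linarith
  have h2 : Stmt3Aux.g (x+3) ≤ Stmt3Aux.T (x+3) :=
    Stmt3Aux.T_ge_g (by linarith)
  have h3 := Stmt3Aux.final_poly hx
  have h4 := Stmt3Aux.trigamma_eq_T x
  rw [h4, h1]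
  linarith
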